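/- arXiv:2411.05156 — 2 statements merged into one kernel-verified Lean document; each statement's English description precedes it below -/
import Mathlib

section
/- Let x, y ∈ ℝ^d and r > 0, δ ∈ (0,1]. If u_1, ..., u_d are i.i.d. Exponential(1) random variables, then the probability that there exists a coordinate i with |x_i - y_i| / u_i^{1/p} ≥ r / δ^{1/p} is exactly 1 - exp(-δ · ‖x-y‖_p^p / r^p), which is at most δ · (‖x-y‖_p / r)^p. -/
open MeasureTheory ProbabilityTheory Real

/-- For `x, y ∈ ℝ^d`, `r > 0`, `δ ∈ (0,1]`, and i.i.d. Exponential(1)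
random variables `u_1, …, u_d`, the probability that some coordinate `i` satisfies
`|x_i - y_i| / u_i^(1/p) ≥ r / δ^(1/p)` equals `1 - exp(-δ‖x-y‖_p^p / r^p)`,
which is at most `δ (‖x-y‖_p / r)^p`. -/
theorem stmt_0
    {Ω : Type*} [MeasurableSpace Ω] (μ : Measure Ω) [IsProbabilityMeasure μ]
    (d : ℕ) (p : ℝ) (hp : 1 ≤ p)
    (x y : Fin d → ℝ) (r δ : ℝ) (hr : 0 < r) (hδ0 : 0 < δ) (hδ1 : δ ≤ 1)
    (u : Fin d → Ω → ℝ)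
    (hmeas : ∀ i, Measurable (u i))
    (hindep : iIndepFun u μ)
    (hexp : ∀ i, ∀ t : ℝ, 0 ≤ t → μ {ω | u i ω > t} = ENNReal.ofReal (Real.exp (-t))) :
    μ {ω | ∃ i : Fin d, |x i - y i| / (u i ω) ^ (1 / p) ≥ r / δ ^ (1 / p)}
      = ENNReal.ofReal
          (1 - Real.exp (-(δ * ((∑ i, |x i - y i| ^ p) ^ (1 / p)) ^ p / r ^ p))) ∧
    μ {ω | ∃ i : Fin d, |x i - y i| / (u i ω) ^ (1 / p) ≥ r / δ ^ (1 / p)}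
      ≤ ENNReal.ofReal (δ * (((∑ i, |x i - y i| ^ p) ^ (1 / p)) / r) ^ p) := by
  have hp0 : 0 < p := lt_of_lt_of_le one_pos hp
  set t : Fin d → ℝ := fun i => δ * |x i - y i| ^ p / r ^ p with ht
  have htnn : ∀ i, 0 ≤ t i := fun i => by positivity
  set A : Fin d → Set Ω := fun i => (u i) ⁻¹' Set.Ioi (t i) with hA
  set E : Set Ω := {ω | ∃ i : Fin d, |x i - y i| / (u i ω) ^ (1 / p) ≥ r / δ ^ (1 / p)}
    with hE
  -- a.e. all coordinates positive
  have hpos : ∀ᵐ ω ∂μ, ∀ i, 0 < u i ω := by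
    rw [MeasureTheory.ae_all_iff]
    intro i
    have h0 : μ {ω | u i ω > 0} = 1 := by
      rw [hexp i 0 le_rfl]; simp
    rw [MeasureTheory.ae_iff]
    have h1 : {ω | ¬ 0 < u i ω} = {ω | u i ω > 0}ᶜ := by ext ω; simp
    rw [h1]
    exact (prob_compl_eq_zero_iff ((hmeas i) measurableSet_Ioi)).2 h0
  -- E agrees a.e. with (⋂ A)ᶜ
  have hEeq : E =ᵐ[μ] ((⋂ i, A i)ᶜ : Set Ω) := by
    rw [Filter.eventuallyEq_set]
    filter_upwards [hpos] with ω hω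
    rw [Set.compl_iInter]
    simp only [hE, Set.mem_setOf_eq, Set.mem_iUnion, Set.mem_compl_iff, hA,
      Set.mem_preimage, Set.mem_Ioi, not_lt, ge_iff_le]
    constructor
    · rintro ⟨i, hi⟩
      refine ⟨i, ?_⟩
      -- u i ω ≤ t i
      have hupos := hω i
      have hδp : (0:ℝ) < δ ^ (1/p) := Real.rpow_pos_of_pos hδ0 _
      have hup : (0:ℝ) < (u i ω) ^ (1/p) := Real.rpow_pos_of_pos hupos _
      rw [div_le_div_iff₀ hδp hup] at hi
      -- r * (u i ω)^(1/p) ≤ |x i - y i| * δ^(1/p)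
      have h2 : (u i ω) ^ (1/p) ≤ |x i - y i| * δ ^ (1/p) / r := by
        rw [le_div_iff₀ hr]; linarith [hi]
      have h3 : ((u i ω) ^ (1/p)) ^ p ≤ (|x i - y i| * δ ^ (1/p) / r) ^ p :=
        Real.rpow_le_rpow (le_of_lt hup) h2 (le_of_lt hp0)
      rw [one_div, Real.rpow_inv_rpow hupos.le hp0.ne'] at h3
      refine h3.trans_eq ?_
      rw [Real.div_rpow (by positivity) hr.le,
        Real.mul_rpow (abs_nonneg _) (by positivity),
        Real.rpow_inv_rpow hδ0.le hp0.ne']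
      simp only [ht]; ring
    · rintro ⟨i, hle⟩
      refine ⟨i, ?_⟩
      have hupos := hω i
      have hδp : (0:ℝ) < δ ^ (1/p) := Real.rpow_pos_of_pos hδ0 _
      have hup : (0:ℝ) < (u i ω) ^ (1/p) := Real.rpow_pos_of_pos hupos _
      have h2 : (u i ω) ^ (1/p) ≤ (t i) ^ (1/p) :=
        Real.rpow_le_rpow hupos.le hle (by positivity)
      have h3 : (t i) ^ (1/p) = |x i - y i| * δ ^ (1/p) / r := by
        rw [ht]
        rw [Real.div_rpow (by positivity) (by positivity),
          Real.mul_rpow hδ0.le (by positivity), one_div,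
          Real.rpow_rpow_inv (abs_nonneg _) hp0.ne',
          Real.rpow_rpow_inv hr.le hp0.ne']
        ring
      rw [h3] at h2
      rw [div_le_div_iff₀ hδp hup]
      have := mul_le_mul_of_nonneg_left h2 hr.le
      rw [mul_div_cancel₀ _ hr.ne'] at this
      linarith
  have hAmeas : ∀ i, MeasurableSet (A i) := fun i => (hmeas i) measurableSet_Ioi
  have hIcap : μ (⋂ i, A i) = ENNReal.ofReal (Real.exp (-(∑ i, t i))) := by
    rw [hindep.meas_iInter (fun i => ⟨Set.Ioi (t i), measurableSet_Ioi, rfl⟩)]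
    have : ∀ i, μ (A i) = ENNReal.ofReal (Real.exp (-(t i))) := by
      intro i
      have := hexp i (t i) (htnn i)
      convert this using 2
      rfl
    refine (Finset.prod_congr rfl fun i _ => this i).trans ?_
    rw [← ENNReal.ofReal_prod_of_nonneg (fun i _ => (Real.exp_pos _).le),
      ← Real.exp_sum]
    congr 1
    rw [← Finset.sum_neg_distrib]
  have hsum : ∑ i, t i = δ * (∑ i, |x i - y i| ^ p) / r ^ p := by
    simp only [ht, Finset.mul_sum, Finset.sum_div]
  have hS : ((∑ i, |x i - y i| ^ p) ^ (1 / p)) ^ p = ∑ i, |x i - y i| ^ p := by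
    rw [one_div, Real.rpow_inv_rpow (Finset.sum_nonneg fun i _ => by positivity) hp0.ne']
  have hμE : μ E = ENNReal.ofReal
      (1 - Real.exp (-(δ * ((∑ i, |x i - y i| ^ p) ^ (1 / p)) ^ p / r ^ p))) := by
    rw [measure_congr hEeq, prob_compl_eq_one_sub (MeasurableSet.iInter hAmeas), hIcap,
      hS, ← hsum]
    rw [← ENNReal.ofReal_one, ← ENNReal.ofReal_sub _ (Real.exp_pos _).le]
  refine ⟨hμE, ?_⟩
  rw [hμE]
  apply ENNReal.ofReal_le_ofReal
  have key : ∀ a : ℝ, 1 - Real.exp (-a) ≤ a := by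
    intro a
    have := Real.add_one_le_exp (-a)
    linarith
  have heq : δ * (((∑ i, |x i - y i| ^ p) ^ (1 / p)) / r) ^ p
      = δ * ((∑ i, |x i - y i| ^ p) ^ (1 / p)) ^ p / r ^ p := by
    rw [Real.div_rpow (by positivity) hr.le]; ring
  rw [heq]
  exact key _
end

section
/- Let x ∈ ℝ^d be nonzero, p ≥ 1, and let u_1,...,u_d be i.i.d. Exponential(1). Let D_1 > 0 and D_2 = 2D_1, and let K > 0. Then with probability at least 1 - exp(-D_1^p) - D_2^p/K, both of the following hold: at least one coordinate i satisfies |x_i|/u_i^{1/p} ≥ ‖x‖_p/D_1, and at most K coordinates i satisfy |x_i|/u_i^{1/p} ≥ ‖x‖_p/D_2. -/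
open MeasureTheory ProbabilityTheory Real

/-- For nonzero `x ∈ ℝ^d`, `p ≥ 1`, i.i.d. Exponential(1) random variables
`u_1, …, u_d`, `D₁ > 0`, `D₂ = 2 D₁`, and `K > 0`: with probability at least
`1 - exp(-D₁^p) - D₂^p / K`, at least one coordinate satisfies
`|x_i|/u_i^(1/p) ≥ ‖x‖_p / D₁` and at most `K` coordinates satisfy
`|x_i|/u_i^(1/p) ≥ ‖x‖_p / D₂`. -/
theorem stmt_3
    {Ω : Type*} [MeasurableSpace Ω] (μ : Measure Ω) [IsProbabilityMeasure μ]
    (d : ℕ) (p : ℝ) (hp : 1 ≤ p)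
    (x : Fin d → ℝ) (hx : x ≠ 0) (D₁ D₂ K : ℝ) (hD₁ : 0 < D₁) (hD₂ : D₂ = 2 * D₁)
    (hK : 0 < K)
    (u : Fin d → Ω → ℝ)
    (hmeas : ∀ i, Measurable (u i))
    (hindep : iIndepFun u μ)
    (hexp : ∀ i, ∀ t : ℝ, 0 ≤ t → μ {ω | u i ω > t} = ENNReal.ofReal (Real.exp (-t))) :
    μ {ω | (∃ i : Fin d, |x i| / (u i ω) ^ (1 / p) ≥ ((∑ i, |x i| ^ p) ^ (1 / p)) / D₁) ∧
        ((Finset.univ.filter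
          (fun i : Fin d =>
            |x i| / (u i ω) ^ (1 / p) ≥ ((∑ i, |x i| ^ p) ^ (1 / p)) / D₂)).card : ℝ) ≤ K}
      ≥ ENNReal.ofReal (1 - Real.exp (-(D₁ ^ p)) - D₂ ^ p / K) := by
  classical
  have hp0 : (0:ℝ) < p := lt_of_lt_of_le one_pos hp
  have hD₂pos : 0 < D₂ := by rw [hD₂]; positivity
  set S2 : ℝ := ∑ i, |x i| ^ p with hS2def
  have hS2pos : 0 < S2 := by
    obtain ⟨i, hi⟩ : ∃ i, x i ≠ 0 := by
      by_contra h; push_neg at h; exact hx (funext h)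
    refine Finset.sum_pos' (fun j _ => Real.rpow_nonneg (abs_nonneg _) _) ?_
    exact ⟨i, Finset.mem_univ i, Real.rpow_pos_of_pos (abs_pos.2 hi) p⟩
  set S : ℝ := S2 ^ (1/p) with hSdef
  have hSpos : 0 < S := Real.rpow_pos_of_pos hS2pos _
  have hSp : S ^ p = S2 := by
    rw [hSdef, one_div, Real.rpow_inv_rpow hS2pos.le hp0.ne']
  -- thresholds
  set τ : ℝ → Fin d → ℝ := fun D i => D ^ p * |x i| ^ p / S2 with hτdef
  have hτ_nonneg : ∀ (D : ℝ) i, 0 < D → 0 ≤ τ D i := by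
    intro D i hD
    have h1 : (0:ℝ) ≤ D ^ p := Real.rpow_nonneg hD.le _
    have h2 : (0:ℝ) ≤ |x i| ^ p := Real.rpow_nonneg (abs_nonneg _) _
    positivity
  have hτ_sum : ∀ D : ℝ, ∑ i, τ D i = D ^ p := by
    intro D
    simp only [hτdef]
    rw [← Finset.sum_div, ← Finset.mul_sum, ← hS2def, mul_div_assoc,
      div_self hS2pos.ne', mul_one]
  -- the key equivalence for positive u
  have key : ∀ D : ℝ, 0 < D → ∀ (i : Fin d) (w : ℝ), 0 < w →
      ((|x i| / w ^ (1/p) ≥ S / D) ↔ w ≤ τ D i) := by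
    intro D hD i w hw
    have hw' : (0:ℝ) < w ^ (1/p) := Real.rpow_pos_of_pos hw _
    have hτeq : τ D i = (|x i| * D / S) ^ p := by
      rw [Real.div_rpow (by positivity) hSpos.le,
        Real.mul_rpow (abs_nonneg _) hD.le, hSp, hτdef]
      ring
    rw [ge_iff_le, div_le_div_iff₀ hD hw', ← le_div_iff₀' hSpos, one_div,
      Real.rpow_inv_le_iff_of_pos hw.le (by positivity) hp0, hτeq]
  -- the u's are a.s. positive
  have hnull : ∀ i, μ {ω | u i ω ≤ 0} = 0 := by
    intro i
    have h1 : {ω | u i ω ≤ 0} = {ω | u i ω > 0}ᶜ := by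
      ext ω; simp [not_lt]
    have h2 : MeasurableSet {ω | u i ω > 0} := (hmeas i) measurableSet_Ioi
    rw [h1, prob_compl_eq_one_sub h2, hexp i 0 le_rfl]
    simp
  -- measurability of the coordinate events
  have hdivmeas : ∀ i, Measurable fun ω => |x i| / (u i ω) ^ (1/p) := by
    intro i
    exact measurable_const.div
      ((Real.continuous_rpow_const (by positivity)).measurable.comp (hmeas i))
  have hsetmeas : ∀ (c : ℝ) (i : Fin d),
      MeasurableSet {ω | |x i| / (u i ω) ^ (1/p) ≥ c} := by
    intro c i
    exact measurableSet_le measurable_const (hdivmeas i)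
  -- Bound 1 : probability that no coordinate passes the D₁ threshold
  have hA : μ {ω | ¬ ∃ i : Fin d, |x i| / (u i ω) ^ (1/p) ≥ S / D₁}
      ≤ ENNReal.ofReal (Real.exp (-(D₁ ^ p))) := by
    have hsub : {ω | ¬ ∃ i : Fin d, |x i| / (u i ω) ^ (1/p) ≥ S / D₁}
        ⊆ (⋂ i, {ω | u i ω > τ D₁ i}) ∪ (⋃ i, {ω | u i ω ≤ 0}) := by
      intro ω hω
      by_cases h0 : ∀ i, 0 < u i ω
      · left
        simp only [Set.mem_iInter, Set.mem_setOf_eq]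
        intro i
        by_contra hle
        push_neg at hle
        exact hω ⟨i, (key D₁ hD₁ i _ (h0 i)).2 hle⟩
      · right
        push_neg at h0
        obtain ⟨i, hi⟩ := h0
        exact Set.mem_iUnion.2 ⟨i, hi⟩
    calc μ {ω | ¬ ∃ i : Fin d, |x i| / (u i ω) ^ (1/p) ≥ S / D₁}
        ≤ μ ((⋂ i, {ω | u i ω > τ D₁ i}) ∪ (⋃ i, {ω | u i ω ≤ 0})) := measure_mono hsub
      _ ≤ μ (⋂ i, {ω | u i ω > τ D₁ i}) + μ (⋃ i, {ω | u i ω ≤ 0}) := measure_union_le _ _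
      _ = μ (⋂ i, {ω | u i ω > τ D₁ i}) := by
          rw [measure_iUnion_null (fun i => hnull i), add_zero]
      _ = ∏ i, μ {ω | u i ω > τ D₁ i} :=
          hindep.meas_iInter (fun i => ⟨Set.Ioi (τ D₁ i), measurableSet_Ioi, rfl⟩)
      _ = ∏ i, ENNReal.ofReal (Real.exp (-(τ D₁ i))) :=
          Finset.prod_congr rfl fun i _ => hexp i _ (hτ_nonneg D₁ i hD₁)
      _ = ENNReal.ofReal (∏ i, Real.exp (-(τ D₁ i))) :=
          (ENNReal.ofReal_prod_of_nonneg fun i _ => (Real.exp_pos _).le).symm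
      _ = ENNReal.ofReal (Real.exp (-(D₁ ^ p))) := by
          rw [← Real.exp_sum]
          congr 1
          rw [← hτ_sum D₁, ← Finset.sum_neg_distrib]
  -- Bound on each coordinate event at the D₂ threshold
  have hE2 : ∀ i, μ {ω | |x i| / (u i ω) ^ (1/p) ≥ S / D₂} ≤ ENNReal.ofReal (τ D₂ i) := by
    intro i
    have hsub : {ω | |x i| / (u i ω) ^ (1/p) ≥ S / D₂}
        ⊆ {ω | u i ω > τ D₂ i}ᶜ ∪ {ω | u i ω ≤ 0} := by
      intro ω hω
      by_cases h0 : 0 < u i ω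
      · left
        simp only [Set.mem_compl_iff, Set.mem_setOf_eq, not_lt]
        exact (key D₂ hD₂pos i _ h0).1 hω
      · right
        exact not_lt.1 h0
    have hτn : 0 ≤ τ D₂ i := hτ_nonneg D₂ i hD₂pos
    calc μ {ω | |x i| / (u i ω) ^ (1/p) ≥ S / D₂}
        ≤ μ ({ω | u i ω > τ D₂ i}ᶜ) + μ {ω | u i ω ≤ 0} :=
          (measure_mono hsub).trans (measure_union_le _ _)
      _ = μ ({ω | u i ω > τ D₂ i}ᶜ) := by rw [hnull i, add_zero]
      _ = 1 - ENNReal.ofReal (Real.exp (-(τ D₂ i))) := by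
          rw [prob_compl_eq_one_sub (show MeasurableSet {ω | u i ω > τ D₂ i} from (hmeas i) measurableSet_Ioi), hexp i _ hτn]
      _ = ENNReal.ofReal (1 - Real.exp (-(τ D₂ i))) := by
          rw [← ENNReal.ofReal_one, ← ENNReal.ofReal_sub _ (Real.exp_pos _).le]
      _ ≤ ENNReal.ofReal (τ D₂ i) := by
          apply ENNReal.ofReal_le_ofReal
          have := Real.add_one_le_exp (-(τ D₂ i))
          linarith
  -- Markov bound for the count at the D₂ threshold
  have hB : μ {ω | ¬ (((Finset.univ.filter
        (fun i : Fin d => |x i| / (u i ω) ^ (1/p) ≥ S / D₂)).card : ℝ) ≤ K)}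
      ≤ ENNReal.ofReal (D₂ ^ p / K) := by
    set f : Ω → ENNReal := fun ω =>
      ∑ i, if |x i| / (u i ω) ^ (1/p) ≥ S / D₂ then (1:ENNReal) else 0 with hfdef
    have hfmeas : Measurable f :=
      Finset.measurable_sum _ fun i _ =>
        Measurable.ite (hsetmeas (S / D₂) i) measurable_const measurable_const
    have hfcard : ∀ ω, f ω = ((Finset.univ.filter
        (fun i : Fin d => |x i| / (u i ω) ^ (1/p) ≥ S / D₂)).card : ENNReal) := by
      intro ω
      rw [hfdef, Finset.card_filter]
      push_cast
      rfl
    have hint : ∫⁻ ω, f ω ∂μ ≤ ENNReal.ofReal (D₂ ^ p) := by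
      have h1 : ∫⁻ ω, f ω ∂μ
          = ∑ i, μ {ω | |x i| / (u i ω) ^ (1/p) ≥ S / D₂} := by
        rw [hfdef]
        rw [lintegral_finset_sum _ (fun i _ =>
          Measurable.ite (hsetmeas (S / D₂) i) measurable_const measurable_const)]
        refine Finset.sum_congr rfl fun i _ => ?_
        have h2 : (fun ω => if |x i| / (u i ω) ^ (1/p) ≥ S / D₂ then (1:ENNReal) else 0)
            = Set.indicator {ω | |x i| / (u i ω) ^ (1/p) ≥ S / D₂} 1 := by
          funext ω; simp [Set.indicator_apply]
        rw [h2, lintegral_indicator_one (hsetmeas (S / D₂) i)]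
      rw [h1]
      calc ∑ i, μ {ω | |x i| / (u i ω) ^ (1/p) ≥ S / D₂}
          ≤ ∑ i, ENNReal.ofReal (τ D₂ i) := Finset.sum_le_sum fun i _ => hE2 i
        _ = ENNReal.ofReal (∑ i, τ D₂ i) :=
            (ENNReal.ofReal_sum_of_nonneg fun i _ => hτ_nonneg D₂ i hD₂pos).symm
        _ = ENNReal.ofReal (D₂ ^ p) := by rw [hτ_sum D₂]
    have hmarkov : ENNReal.ofReal K * μ {ω | ¬ (((Finset.univ.filter
        (fun i : Fin d => |x i| / (u i ω) ^ (1/p) ≥ S / D₂)).card : ℝ) ≤ K)}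
        ≤ ∫⁻ ω, f ω ∂μ := by
      refine le_trans (mul_le_mul_right (measure_mono ?_) _)
        (mul_meas_ge_le_lintegral hfmeas (ENNReal.ofReal K))
      intro ω hω
      simp only [Set.mem_setOf_eq, not_le] at hω
      simp only [Set.mem_setOf_eq, hfcard ω]
      calc ENNReal.ofReal K
          ≤ ENNReal.ofReal (((Finset.univ.filter
            (fun i : Fin d => |x i| / (u i ω) ^ (1/p) ≥ S / D₂)).card : ℝ)) :=
            ENNReal.ofReal_le_ofReal hω.le
        _ = _ := ENNReal.ofReal_natCast _
    have hK0 : ENNReal.ofReal K ≠ 0 := by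
      simp [ENNReal.ofReal_eq_zero, not_le, hK]
    rw [ENNReal.ofReal_div_of_pos hK]
    rw [ENNReal.le_div_iff_mul_le (Or.inl hK0) (Or.inl ENNReal.ofReal_ne_top)]
    rw [mul_comm]
    exact hmarkov.trans hint
  -- Assemble via the complement
  set T : Set Ω := {ω | (∃ i : Fin d, |x i| / (u i ω) ^ (1 / p) ≥ S / D₁) ∧
      ((Finset.univ.filter
        (fun i : Fin d => |x i| / (u i ω) ^ (1 / p) ≥ S / D₂)).card : ℝ) ≤ K} with hTdef
  have hTc : μ Tᶜ ≤ ENNReal.ofReal (Real.exp (-(D₁ ^ p))) + ENNReal.ofReal (D₂ ^ p / K) := by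
    have hsub : Tᶜ ⊆ {ω | ¬ ∃ i : Fin d, |x i| / (u i ω) ^ (1/p) ≥ S / D₁}
        ∪ {ω | ¬ (((Finset.univ.filter
          (fun i : Fin d => |x i| / (u i ω) ^ (1/p) ≥ S / D₂)).card : ℝ) ≤ K)} := by
      intro ω hω
      rw [hTdef] at hω
      simp only [Set.mem_compl_iff, Set.mem_setOf_eq, not_and_or] at hω
      rcases hω with h | h
      · exact Or.inl h
      · exact Or.inr h
    exact le_trans (measure_mono hsub)
      (le_trans (measure_union_le _ _) (add_le_add hA hB))
  have hone : (1:ENNReal) ≤ μ T + μ Tᶜ := by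
    have := measure_union_le (μ := μ) T Tᶜ
    rwa [Set.union_compl_self, measure_univ] at this
  calc ENNReal.ofReal (1 - Real.exp (-(D₁ ^ p)) - D₂ ^ p / K)
      = ENNReal.ofReal (1 - (Real.exp (-(D₁ ^ p)) + D₂ ^ p / K)) := by ring_nf
    _ ≤ 1 - (ENNReal.ofReal (Real.exp (-(D₁ ^ p))) + ENNReal.ofReal (D₂ ^ p / K)) := by
        rw [← ENNReal.ofReal_add (Real.exp_pos _).le (by positivity), ← ENNReal.ofReal_one]
        exact (ENNReal.ofReal_sub _ (by positivity)).le
    _ ≤ 1 - μ Tᶜ := tsub_le_tsub_left hTc 1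
    _ ≤ μ T := by
        rw [tsub_le_iff_right]
        exact hone
end
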